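/- Let R be a ring whose regular elements C form a left Ore set with Q = C^{-1}R left Noetherian. Then the map p ↦ C^{-1}p gives a bijection between the set of minimal prime ideals of R and the set of minimal prime ideals of Q, with inverse q ↦ q ∩ R. -/

import Mathlib

/-- A (two-sided) prime ideal of a possibly noncommutative ring: a proper two-sided
ideal `P` such that `a R b ⊆ P` implies `a ∈ P` or `b ∈ P`. -/
def IsPrimeTwoSided {R : Type*} [Ring R] (P : Ideal R) : Prop :=
  (∀ a ∈ P, ∀ r : R, a * r ∈ P) ∧ P ≠ ⊤ ∧
    ∀ a b : R, (∀ r : R, a * r * b ∈ P) → a ∈ P ∨ b ∈ P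

/-- The prime radical (intersection of all two-sided prime ideals) of a ring. -/
def primeRadical (R : Type*) [Ring R] : Ideal R :=
  sInf {P : Ideal R | IsPrimeTwoSided P}

/-- An ideal `n` is nilpotent if, for some `k ≥ 1`, every product of `k` elements of
`n` vanishes. -/
def IdealIsNilpotent {R : Type*} [Ring R] (n : Ideal R) : Prop :=
  ∃ k : ℕ, 0 < k ∧ ∀ l : List R, (∀ x ∈ l, x ∈ n) → l.length = k → l.prod = 0

/-- `P` is a minimal (two-sided) prime ideal of the ring `R`. -/
def IsMinimalPrimeTwoSided {R : Type*} [Ring R] (P : Ideal R) : Prop :=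
  IsPrimeTwoSided P ∧ ∀ P' : Ideal R, IsPrimeTwoSided P' → P' ≤ P → P' = P

section Generic
variable {A : Type*} [Ring A]

/-- `I` is closed under right multiplication. -/
def RightClosed (I : Ideal A) : Prop := ∀ x ∈ I, ∀ y : A, x * y ∈ I

lemma IsPrimeTwoSided.rightClosed {P : Ideal A} (h : IsPrimeTwoSided P) : RightClosed P := h.1

/-- the two-sided ideal generated by `a`. -/
def tsSpan (a : A) : Ideal A := Submodule.span A {x | ∃ r s : A, x = r * a * s}

lemma tsSpan_self (a : A) : a ∈ tsSpan a :=
  Submodule.subset_span ⟨1, 1, by simp⟩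

lemma tsSpan_rightClosed (a : A) : RightClosed (tsSpan a) := by
  intro x hx
  refine Submodule.span_induction (p := fun x _ => ∀ y, x * y ∈ tsSpan a) ?_ ?_ ?_ ?_ hx
  · rintro x ⟨r, s, rfl⟩ y
    exact Submodule.subset_span ⟨r, s * y, by simp [mul_assoc]⟩
  · intro y; simp
  · intro u v _ _ hu hv y
    simpa [add_mul] using (tsSpan a).add_mem (hu y) (hv y)
  · intro q x _ hx y
    simpa [smul_eq_mul, mul_assoc] using (tsSpan a).mul_mem_left q (hx y)

lemma sup_rightClosed {I J : Ideal A} (hI : RightClosed I) (hJ : RightClosed J) :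
    RightClosed (I ⊔ J) := by
  intro x hx y
  rcases Submodule.mem_sup.mp hx with ⟨i, hi, j, hj, rfl⟩
  rw [add_mul]
  exact Submodule.add_mem _ (Submodule.mem_sup_left (hI i hi y))
    (Submodule.mem_sup_right (hJ j hj y))

/-- Product of two ideals (span of pairwise products). -/
def idMul (I J : Ideal A) : Ideal A :=
  Submodule.span A {x | ∃ a ∈ I, ∃ b ∈ J, x = a * b}

lemma mem_idMul {I J : Ideal A} {a b : A} (ha : a ∈ I) (hb : b ∈ J) : a * b ∈ idMul I J :=
  Submodule.subset_span ⟨a, ha, b, hb, rfl⟩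

lemma idMul_le {I J K : Ideal A} (h : ∀ a ∈ I, ∀ b ∈ J, a * b ∈ K) : idMul I J ≤ K := by
  rw [idMul, Submodule.span_le]
  rintro x ⟨a, ha, b, hb, rfl⟩
  exact h a ha b hb

lemma idMul_mono {I I' J J' : Ideal A} (h1 : I ≤ I') (h2 : J ≤ J') :
    idMul I J ≤ idMul I' J' := by
  apply idMul_le
  intro a ha b hb
  exact mem_idMul (h1 ha) (h2 hb)

lemma idMul_rightClosed {I J : Ideal A} (hJ : RightClosed J) : RightClosed (idMul I J) := by
  intro x hx
  refine Submodule.span_induction (p := fun x _ => ∀ y, x * y ∈ idMul I J) ?_ ?_ ?_ ?_ hx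
  · rintro x ⟨a, ha, b, hb, rfl⟩ y
    rw [mul_assoc]
    exact mem_idMul ha (hJ b hb y)
  · intro y; simp
  · intro u v _ _ hu hv y
    simpa [add_mul] using Submodule.add_mem _ (hu y) (hv y)
  · intro q x _ hx y
    simpa [smul_eq_mul, mul_assoc] using (idMul I J).mul_mem_left q (hx y)

/-- associativity, in the only direction we need. -/
lemma idMul_assoc_le {I J K : Ideal A} (hI : RightClosed I) :
    idMul I (idMul J K) ≤ idMul (idMul I J) K := by
  apply idMul_le
  intro a ha y hy
  refine Submodule.span_induction (p := fun y _ => ∀ a ∈ I, a * y ∈ idMul (idMul I J) K)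
    ?_ ?_ ?_ ?_ hy a ha
  · rintro x ⟨b, hb, c, hc, rfl⟩ a ha
    rw [← mul_assoc]
    exact mem_idMul (mem_idMul ha hb) hc
  · intro a _; simp
  · intro u v _ _ hu hv a ha
    simpa [mul_add] using Submodule.add_mem _ (hu a ha) (hv a ha)
  · intro q x _ hx a ha
    rw [smul_eq_mul, ← mul_assoc]
    exact hx (a * q) (hI a ha q)

def prodList : List (Ideal A) → Ideal A
  | [] => ⊤
  | P :: l => idMul P (prodList l)

lemma prodList_rightClosed : ∀ l : List (Ideal A), RightClosed (prodList l)
  | [] => fun x _ y => trivial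
  | P :: l => idMul_rightClosed (prodList_rightClosed l)

lemma le_idMul_top {J : Ideal A} : J ≤ idMul ⊤ J := by
  intro x hx
  simpa using mem_idMul (Submodule.mem_top (x := (1:A))) hx

lemma prodList_append_le {l₁ l₂ : List (Ideal A)} (h : ∀ P ∈ l₁, RightClosed P) :
    prodList (l₁ ++ l₂) ≤ idMul (prodList l₁) (prodList l₂) := by
  induction l₁ with
  | nil => simpa [prodList] using le_idMul_top
  | cons P l ih =>
      have hP : RightClosed P := h P (List.mem_cons_self)
      calc prodList ((P :: l) ++ l₂) = idMul P (prodList (l ++ l₂)) := rfl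
        _ ≤ idMul P (idMul (prodList l) (prodList l₂)) :=
            idMul_mono le_rfl (ih fun P hP' => h P (List.mem_cons_of_mem _ hP'))
        _ ≤ idMul (idMul P (prodList l)) (prodList l₂) := idMul_assoc_le hP

lemma idMul_le_prime {p I J : Ideal A} (hp : IsPrimeTwoSided p) (hI : RightClosed I)
    (h : idMul I J ≤ p) : I ≤ p ∨ J ≤ p := by
  by_contra hc
  push_neg at hc
  obtain ⟨h1, h2⟩ := hc
  obtain ⟨a, ha, hap⟩ := SetLike.not_le_iff_exists.mp h1
  obtain ⟨b, hb, hbp⟩ := SetLike.not_le_iff_exists.mp h2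
  have : ∀ r : A, a * r * b ∈ p := fun r => h (mem_idMul (hI a ha r) hb)
  rcases hp.2.2 a b this with h | h
  · exact hap h
  · exact hbp h

lemma prodList_le_prime {p : Ideal A} (hp : IsPrimeTwoSided p) :
    ∀ l : List (Ideal A), (∀ P ∈ l, RightClosed P) → prodList l ≤ p → ∃ P ∈ l, P ≤ p := by
  intro l
  induction l with
  | nil =>
      intro _ h
      exact absurd (Ideal.eq_top_iff_one p |>.mpr (h (by simp [prodList]))) hp.2.1
  | cons P l ih =>
      intro hrc h
      rcases idMul_le_prime hp (hrc P (List.mem_cons_self)) h with h' | h'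
      · exact ⟨P, List.mem_cons_self, h'⟩
      · obtain ⟨P', hP', hle⟩ := ih (fun P h => hrc P (List.mem_cons_of_mem _ h)) h'
        exact ⟨P', List.mem_cons_of_mem _ hP', hle⟩

end Generic

section Generic2
variable {A : Type*} [Ring A]

lemma sInf_chain_prime {S : Set (Ideal A)} (hch : IsChain (· ≤ ·) S) (hne : S.Nonempty)
    (hpr : ∀ I ∈ S, IsPrimeTwoSided I) : IsPrimeTwoSided (sInf S) := by
  obtain ⟨I₀, hI₀⟩ := hne
  refine ⟨?_, ?_, ?_⟩
  · intro a ha r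
    rw [Submodule.mem_sInf] at ha ⊢
    intro I hI
    exact (hpr I hI).1 a (ha I hI) r
  · intro htop
    have : (1:A) ∈ sInf S := htop ▸ Submodule.mem_top
    exact (hpr I₀ hI₀).2.1 (Ideal.eq_top_iff_one _ |>.mpr (Submodule.mem_sInf.mp this I₀ hI₀))
  · intro a b hab
    by_cases haJ : a ∈ sInf S
    · exact Or.inl haJ
    right
    rw [Submodule.mem_sInf] at haJ
    push_neg at haJ
    obtain ⟨I₁, hI₁, haI₁⟩ := haJ
    have hb₁ : b ∈ I₁ := by
      rcases (hpr I₁ hI₁).2.2 a b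
        (fun r => Submodule.mem_sInf.mp (hab r) I₁ hI₁) with h | h
      · exact absurd h haI₁
      · exact h
    rw [Submodule.mem_sInf]
    intro I hI
    rcases hch.total hI hI₁ with hle | hle
    · have haI : a ∉ I := fun h => haI₁ (hle h)
      rcases (hpr I hI).2.2 a b (fun r => Submodule.mem_sInf.mp (hab r) I hI) with h | h
      · exact absurd h haI
      · exact h
    · exact hle hb₁

lemma exists_minimal_prime_le {p : Ideal A} (hp : IsPrimeTwoSided p) :
    ∃ q : Ideal A, IsMinimalPrimeTwoSided q ∧ q ≤ p := by
  let s : Set (Ideal A)ᵒᵈ := {q | IsPrimeTwoSided (OrderDual.ofDual q) ∧ OrderDual.ofDual q ≤ p}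
  have hzorn : ∀ c ⊆ s, IsChain (· ≤ ·) c → ∀ y ∈ c, ∃ ub ∈ s, ∀ z ∈ c, z ≤ ub := by
    intro c hcs hchain y hyc
    set T : Set (Ideal A) := OrderDual.ofDual '' c with hT
    have hTch : IsChain (· ≤ ·) T := by
      rintro _ ⟨x, hx, rfl⟩ _ ⟨y', hy', rfl⟩ hne
      rcases hchain hx hy' (fun h => hne (congrArg OrderDual.ofDual h)) with h | h
      · exact Or.inr h
      · exact Or.inl h
    have hTne : T.Nonempty := ⟨OrderDual.ofDual y, y, hyc, rfl⟩
    have hTpr : ∀ I ∈ T, IsPrimeTwoSided I := by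
      rintro _ ⟨x, hx, rfl⟩; exact (hcs hx).1
    refine ⟨OrderDual.toDual (sInf T), ⟨sInf_chain_prime hTch hTne hTpr, ?_⟩, ?_⟩
    · exact le_trans (sInf_le ⟨y, hyc, rfl⟩) (hcs hyc).2
    · intro z hzc
      exact sInf_le (show OrderDual.ofDual z ∈ T from ⟨z, hzc, rfl⟩)
  obtain ⟨m, hpm, hms, hmax⟩ := zorn_le_nonempty₀ s hzorn (OrderDual.toDual p) ⟨hp, le_rfl⟩
  refine ⟨OrderDual.ofDual m, ⟨hms.1, ?_⟩, hms.2⟩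
  intro P' hP' hle
  have hP's : OrderDual.toDual P' ∈ s := ⟨hP', le_trans hle hms.2⟩
  exact le_antisymm hle (hmax hP's hle)

lemma exists_prime_prodList_bot [IsNoetherianRing A] :
    ∃ l : List (Ideal A), (∀ P ∈ l, IsPrimeTwoSided P) ∧ prodList l ≤ ⊥ := by
  by_contra hbot
  set S : Set (Ideal A) :=
    {I | RightClosed I ∧ ¬∃ l : List (Ideal A), (∀ P ∈ l, IsPrimeTwoSided P) ∧ prodList l ≤ I}
    with hS
  have hSne : S.Nonempty := ⟨⊥, fun x hx y => by simp_all, hbot⟩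
  obtain ⟨I, hIS, hImax⟩ := set_has_maximal_iff_noetherian.mpr ‹_› S hSne
  obtain ⟨hIrc, hInl⟩ := hIS
  have hInotprime : ¬ IsPrimeTwoSided I := by
    intro hpr
    exact hInl ⟨[I], by simpa using hpr, idMul_le (fun a ha b _ => hIrc a ha b)⟩
  have hItop : I ≠ ⊤ := by
    rintro rfl
    exact hInl ⟨[], by simp, by simp [prodList]⟩
  have hex : ∃ a b : A, (∀ r : A, a * r * b ∈ I) ∧ a ∉ I ∧ b ∉ I := by
    by_contra hno
    push_neg at hno
    refine hInotprime ⟨hIrc, hItop, ?_⟩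
    intro a b hab
    by_cases ha : a ∈ I
    · exact Or.inl ha
    · exact Or.inr (hno a b hab ha)
  obtain ⟨a, b, hab, haI, hbI⟩ := hex
  have key : ∀ x : A, x ∉ I → ∃ l : List (Ideal A),
      (∀ P ∈ l, IsPrimeTwoSided P) ∧ prodList l ≤ I ⊔ tsSpan x := by
    intro x hx
    by_contra hnl
    have hmem : I ⊔ tsSpan x ∈ S := ⟨sup_rightClosed hIrc (tsSpan_rightClosed x), hnl⟩
    have hlt : I < I ⊔ tsSpan x :=
      lt_of_le_of_ne le_sup_left
        (fun h => hx (h ▸ Submodule.mem_sup_right (tsSpan_self x)))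
    exact hImax _ hmem hlt
  obtain ⟨lA, hlA, hlAle⟩ := key a haI
  obtain ⟨lB, hlB, hlBle⟩ := key b hbI
  -- the product of the two sup ideals lands in I
  have hABI : idMul (I ⊔ tsSpan a) (I ⊔ tsSpan b) ≤ I := by
    apply idMul_le
    intro x hx y hy
    rcases Submodule.mem_sup.mp hx with ⟨i, hi, u, hu, rfl⟩
    rcases Submodule.mem_sup.mp hy with ⟨j, hj, v, hv, rfl⟩
    have h1 : i * (j + v) ∈ I := hIrc i hi _
    have h2 : u * j ∈ I := Ideal.mul_mem_left I u hj
    have h3 : u * v ∈ I := by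
      refine Submodule.span_induction
        (p := fun u _ => ∀ v ∈ tsSpan b, u * v ∈ I) ?_ ?_ ?_ ?_ hu v hv
      · rintro _ ⟨r, s, rfl⟩ v hv
        refine Submodule.span_induction
          (p := fun v _ => ∀ r s : A, r * a * s * v ∈ I) ?_ ?_ ?_ ?_ hv r s
        · rintro _ ⟨r', s', rfl⟩ r s
          have h0 : a * (s * r') * b ∈ I := hab (s * r')
          have h0' : r * (a * (s * r') * b) ∈ I := Ideal.mul_mem_left I r h0
          have h0'' : r * (a * (s * r') * b) * s' ∈ I := hIrc _ h0' s'
          have heq : r * a * s * (r' * b * s') = r * (a * (s * r') * b) * s' := by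
            simp [mul_assoc]
          rw [heq]; exact h0''
        · intro r s; simp
        · intro w w' _ _ hw hw' r s
          simpa [mul_add] using Submodule.add_mem _ (hw r s) (hw' r s)
        · intro q w _ hw r s
          have heq : r * a * s * (q • w) = r * a * (s * q) * w := by
            simp [smul_eq_mul, mul_assoc]
          rw [heq]; exact hw r (s * q)
      · intro v hv; simp
      · intro w w' _ _ hw hw' v hv
        simpa [add_mul] using Submodule.add_mem _ (hw v hv) (hw' v hv)
      · intro q w _ hw v hv
        simpa [smul_eq_mul, mul_assoc] using Ideal.mul_mem_left I q (hw v hv)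
    have heq : (i + u) * (j + v) = i * (j + v) + (u * j + u * v) := by noncomm_ring
    rw [heq]
    exact Submodule.add_mem _ h1 (Submodule.add_mem _ h2 h3)
  refine hInl ⟨lA ++ lB, ?_, ?_⟩
  · intro P hP
    rcases List.mem_append.mp hP with h | h
    · exact hlA P h
    · exact hlB P h
  · calc prodList (lA ++ lB) ≤ idMul (prodList lA) (prodList lB) :=
          prodList_append_le (fun P hP => (hlA P hP).rightClosed)
      _ ≤ idMul (I ⊔ tsSpan a) (I ⊔ tsSpan b) := idMul_mono hlAle hlBle
      _ ≤ I := hABI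

end Generic2

section Loc
variable {R Q : Type*} [Ring R] [Ring Q] (φ : R →+* Q)

/-- The extension `C⁻¹I` of a left ideal `I` to the quotient ring. -/
def extI (hOre : ∀ (r c : R), IsRegular c → ∃ c' r' : R, IsRegular c' ∧ c' * r = r' * c)
    (hfrac : ∀ q : Q, ∃ c r : R, IsRegular c ∧ φ c * q = φ r) (I : Ideal R) : Ideal Q where
  carrier := {q | ∃ c a : R, IsRegular c ∧ a ∈ I ∧ φ c * q = φ a}
  zero_mem' := ⟨1, 0, isRegular_one, I.zero_mem, by simp⟩
  add_mem' := by
    rintro q q' ⟨c, a, hc, ha, he⟩ ⟨c', a', hc', ha', he'⟩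
    obtain ⟨c₁, r₁, hc₁, h1⟩ := hOre c' c hc
    refine ⟨c₁ * c', r₁ * a + c₁ * a', hc₁.mul hc',
      Submodule.add_mem _ (I.mul_mem_left _ ha) (I.mul_mem_left _ ha'), ?_⟩
    have e1 : φ (c₁ * c') * q = φ (r₁ * a) := by
      rw [h1, map_mul, map_mul, mul_assoc, he]
    have e2 : φ (c₁ * c') * q' = φ (c₁ * a') := by
      rw [map_mul, map_mul, mul_assoc, he']
    rw [mul_add, e1, e2, ← map_add]
  smul_mem' := by
    intro q₀ q hq
    obtain ⟨c, a, hc, ha, he⟩ := hq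
    obtain ⟨d, s, hd, hds⟩ := hfrac q₀
    obtain ⟨c₂, s₂, hc₂, h2⟩ := hOre s c hc
    simp only [Set.mem_setOf_eq, smul_eq_mul]
    refine ⟨c₂ * d, s₂ * a, hc₂.mul hd, I.mul_mem_left _ ha, ?_⟩
    have e : φ (c₂ * d) * (q₀ * q) = φ c₂ * (φ d * q₀) * q := by
      simp [map_mul, mul_assoc]
    rw [e, hds, ← map_mul, h2, map_mul, mul_assoc, he, ← map_mul]

variable (hOre : ∀ (r c : R), IsRegular c → ∃ c' r' : R, IsRegular c' ∧ c' * r = r' * c)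
variable (hinj : Function.Injective φ)
variable (hunit : ∀ c : R, IsRegular c → IsUnit (φ c))
variable (hfrac : ∀ q : Q, ∃ c r : R, IsRegular c ∧ φ c * q = φ r)

lemma mem_extI {I : Ideal R} {q : Q} :
    q ∈ extI φ hOre hfrac I ↔ ∃ c a : R, IsRegular c ∧ a ∈ I ∧ φ c * q = φ a := Iff.rfl

/-- `{z | z * c ^ n ∈ I}`. -/
def powPre (I : Ideal R) (c : R) (n : ℕ) : Ideal R where
  carrier := {z | z * c ^ n ∈ I}
  zero_mem' := by simp
  add_mem' := by
    intro a b ha hb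
    simp only [Set.mem_setOf_eq] at *
    simpa [add_mul] using I.add_mem ha hb
  smul_mem' := by
    intro r z hz
    simp only [Set.mem_setOf_eq, smul_eq_mul] at *
    simpa [mul_assoc] using I.mul_mem_left r hz

lemma mem_powPre {I : Ideal R} {c z : R} {n : ℕ} : z ∈ powPre I c n ↔ z * c ^ n ∈ I := Iff.rfl

lemma powPre_zero (I : Ideal R) (c : R) : powPre I c 0 = I := by
  ext z; simp [mem_powPre]

include hunit in
lemma mem_extI_powPre_succ {I : Ideal R} {c : R} (hc : IsRegular c) (n : ℕ) (q : Q) :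
    q ∈ extI φ hOre hfrac (powPre I c (n+1)) ↔
      q * φ c ∈ extI φ hOre hfrac (powPre I c n) := by
  constructor
  · rintro ⟨d, z, hd, hz, he⟩
    refine ⟨d, z * c, hd, ?_, ?_⟩
    · show z * c * c ^ n ∈ I
      rw [mem_powPre] at hz
      simpa [pow_succ', mul_assoc] using hz
    · rw [← mul_assoc, he, ← map_mul]
  · rintro ⟨d, z, hd, hz, he⟩
    rw [mem_powPre] at hz
    obtain ⟨c₄, z₄, hc₄, h4⟩ := hOre z c hc
    refine ⟨c₄ * d, z₄, hc₄.mul hd, ?_, ?_⟩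
    · show z₄ * c ^ (n+1) ∈ I
      have e : z₄ * c ^ (n+1) = c₄ * (z * c ^ n) := by
        rw [pow_succ', ← mul_assoc, ← h4, mul_assoc]
      rw [e]; exact I.mul_mem_left _ hz
    · have h5 : φ (c₄ * d) * q * φ c = φ z₄ * φ c := by
        simp only [map_mul, mul_assoc]
        rw [he, ← map_mul, h4, map_mul]
      exact (hunit c hc).mul_right_cancel h5

include hunit in
lemma mem_extI_powPre_iff {I : Ideal R} {c : R} (hc : IsRegular c) (n : ℕ) :
    ∀ q : Q, q ∈ extI φ hOre hfrac (powPre I c n) ↔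
      q * (φ c) ^ n ∈ extI φ hOre hfrac (powPre I c 0) := by
  induction n with
  | zero => intro q; simp
  | succ n ih =>
      intro q
      rw [mem_extI_powPre_succ φ hOre hunit hfrac hc n q, ih (q * φ c), pow_succ',
        ← mul_assoc]

include hunit in
lemma satur [IsNoetherianRing Q] {I : Ideal R} (hI : RightClosed I) {z c : R}
    (hc : IsRegular c) (h : z * c ∈ I) : φ z ∈ extI φ hOre hfrac I := by
  have hstep : ∀ n, extI φ hOre hfrac (powPre I c n) ≤ extI φ hOre hfrac (powPre I c (n+1)) := by
    rintro n q ⟨d, a, hd, ha, he⟩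
    refine ⟨d, a, hd, ?_, he⟩
    show a * c ^ (n+1) ∈ I
    rw [mem_powPre] at ha
    rw [pow_succ, ← mul_assoc]
    exact hI _ ha c
  set f : ℕ →o Ideal Q :=
    ⟨fun n => extI φ hOre hfrac (powPre I c n), monotone_nat_of_le_succ hstep⟩ with hf
  obtain ⟨N, hN⟩ := monotone_stabilizes_iff_noetherian.mpr ‹_› f
  have hstab : f N = f (N+1) := hN (N+1) (Nat.le_succ N)
  set u : Qˣ := (hunit c hc).unit with hu'
  have hu : (u : Q) = φ c := (hunit c hc).unit_spec
  have hu1 : (u⁻¹ ^ N : Qˣ) * u ^ (N+1) = u := by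
    rw [inv_pow, pow_succ, inv_mul_cancel_left]
  have h1 : (φ z * ↑(u⁻¹ ^ N)) * (φ c) ^ (N+1) = φ (z * c) := by
    calc (φ z * ↑(u⁻¹ ^ N)) * (φ c) ^ (N+1)
        = φ z * (↑(u⁻¹ ^ N) * ↑(u ^ (N+1))) := by
          rw [← hu, ← Units.val_pow_eq_pow_val, mul_assoc]
      _ = φ z * ↑(u⁻¹ ^ N * u ^ (N+1)) := by rw [Units.val_mul]
      _ = φ z * φ c := by rw [hu1, hu]
      _ = φ (z * c) := (map_mul φ z c).symm
  have h2 : φ (z * c) ∈ extI φ hOre hfrac (powPre I c 0) := by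
    rw [powPre_zero]
    exact ⟨1, z * c, isRegular_one, h, by simp⟩
  have h4 : (φ z * ↑(u⁻¹ ^ N)) ∈ f (N+1) :=
    (mem_extI_powPre_iff φ hOre hunit hfrac hc (N+1) _).mpr (h1 ▸ h2)
  rw [← hstab] at h4
  have h6 := (mem_extI_powPre_iff φ hOre hunit hfrac hc N _).mp h4
  have h7 : (φ z * ↑(u⁻¹ ^ N)) * (φ c) ^ N = φ z := by
    rw [← hu, ← Units.val_pow_eq_pow_val, mul_assoc, ← Units.val_mul, inv_pow,
      inv_mul_cancel, Units.val_one, mul_one]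
  rw [h7, powPre_zero] at h6
  exact h6

end Loc

section Loc2
variable {R Q : Type*} [Ring R] [Ring Q] (φ : R →+* Q)
variable (hOre : ∀ (r c : R), IsRegular c → ∃ c' r' : R, IsRegular c' ∧ c' * r = r' * c)
variable (hinj : Function.Injective φ)
variable (hunit : ∀ c : R, IsRegular c → IsUnit (φ c))
variable (hfrac : ∀ q : Q, ∃ c r : R, IsRegular c ∧ φ c * q = φ r)

include hunit hfrac in
lemma mem_iff_frac (P : Ideal Q) (q : Q) :
    q ∈ P ↔ ∃ c a : R, IsRegular c ∧ a ∈ Ideal.comap φ P ∧ φ c * q = φ a := by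
  constructor
  · intro hq
    obtain ⟨c, r, hc, he⟩ := hfrac q
    refine ⟨c, r, hc, ?_, he⟩
    rw [Ideal.mem_comap, ← he]
    exact Ideal.mul_mem_left P _ hq
  · rintro ⟨c, a, hc, ha, he⟩
    obtain ⟨u, hu⟩ := hunit c hc
    have h := Ideal.mul_mem_left P ↑u⁻¹ (Ideal.mem_comap.mp ha)
    rwa [← he, ← hu, Units.inv_mul_cancel_left] at h

include hunit hfrac in
lemma le_of_comap_le {P₁ P₂ : Ideal Q}
    (h : Ideal.comap φ P₁ ≤ Ideal.comap φ P₂) : P₁ ≤ P₂ := by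
  intro q hq
  obtain ⟨c, a, hc, ha, he⟩ := (mem_iff_frac φ hunit hfrac P₁ q).mp hq
  exact (mem_iff_frac φ hunit hfrac P₂ q).mpr ⟨c, a, hc, h ha, he⟩

include hOre hinj hunit hfrac in
lemma comap_isPrime2 [IsNoetherianRing Q] {P : Ideal Q} (hP : IsPrimeTwoSided P) :
    IsPrimeTwoSided (Ideal.comap φ P) := by
  refine ⟨?_, ?_, ?_⟩
  · intro a ha r
    rw [Ideal.mem_comap, map_mul]
    exact hP.1 _ (Ideal.mem_comap.mp ha) (φ r)
  · intro h
    apply hP.2.1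
    rw [Ideal.eq_top_iff_one] at h ⊢
    simpa using Ideal.mem_comap.mp h
  · intro x y hxy
    set A : Ideal R :=
      { carrier := {z | ∀ r : R, z * r * y ∈ Ideal.comap φ P}
        zero_mem' := by intro r; simp
        add_mem' := by
          intro a b ha hb r
          simpa [add_mul] using Submodule.add_mem _ (ha r) (hb r)
        smul_mem' := by
          intro s z hz r
          simpa [smul_eq_mul, mul_assoc] using
            Ideal.mul_mem_left (Ideal.comap φ P) s (hz r) } with hA
    have hArc : RightClosed A := by
      intro z hz s r
      have := hz (s * r)
      simpa [mul_assoc] using this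
    have key : ∀ q : Q, φ x * q * φ y ∈ P := by
      intro q
      obtain ⟨c, r, hc, hcq⟩ := hfrac q
      obtain ⟨c₁, x₁, hc₁, h1⟩ := hOre x c hc
      have hxA : x ∈ A := hxy
      have hx₁A : x₁ * c ∈ A := by rw [← h1]; exact A.mul_mem_left c₁ hxA
      obtain ⟨d, z, hd, hzA, he⟩ :=
        satur φ hOre hunit hfrac hArc hc hx₁A
      have hdx : d * x₁ = z := hinj (by rw [map_mul, he])
      have hzry : φ (z * r * y) ∈ P := hzA r
      have heq : φ (z * r * y) = φ d * (φ c₁ * (φ x * q * φ y)) := by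
        rw [← hdx]
        calc φ (d * x₁ * r * y)
            = φ d * (φ x₁ * (φ r * φ y)) := by simp [map_mul, mul_assoc]
          _ = φ d * (φ x₁ * (φ c * (q * φ y))) := by rw [← hcq, mul_assoc]
          _ = φ d * (φ x₁ * φ c * (q * φ y)) := by rw [← mul_assoc (φ x₁)]
          _ = φ d * (φ c₁ * φ x * (q * φ y)) := by rw [← map_mul, ← h1, map_mul]
          _ = φ d * (φ c₁ * (φ x * q * φ y)) := by simp [mul_assoc]
      obtain ⟨ud, hud⟩ := hunit d hd
      obtain ⟨uc, huc⟩ := hunit c₁ hc₁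
      have hm1 : φ c₁ * (φ x * q * φ y) ∈ P := by
        have h' := Ideal.mul_mem_left P ↑ud⁻¹ hzry
        rwa [heq, ← hud, Units.inv_mul_cancel_left] at h'
      have hm2 : φ x * q * φ y ∈ P := by
        have h' := Ideal.mul_mem_left P ↑uc⁻¹ hm1
        rwa [← huc, Units.inv_mul_cancel_left] at h'
      exact hm2
    rcases hP.2.2 (φ x) (φ y) key with h | h
    · exact Or.inl (Ideal.mem_comap.mpr h)
    · exact Or.inr (Ideal.mem_comap.mpr h)

lemma prodList_comap_le (l : List (Ideal Q)) :
    prodList (l.map (Ideal.comap φ)) ≤ Ideal.comap φ (prodList l) := by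
  induction l with
  | nil => simp [prodList]
  | cons P l ih =>
      show idMul (Ideal.comap φ P) (prodList (l.map (Ideal.comap φ))) ≤ _
      refine le_trans (idMul_mono le_rfl ih) (idMul_le ?_)
      intro a ha b hb
      rw [Ideal.mem_comap, map_mul]
      exact mem_idMul (Ideal.mem_comap.mp ha) (Ideal.mem_comap.mp hb)

include hOre hinj hunit hfrac in
lemma exists_min_prime_comap_eq [IsNoetherianRing Q] {p : Ideal R}
    (hp : IsMinimalPrimeTwoSided p) :
    ∃ P : Ideal Q, IsMinimalPrimeTwoSided P ∧ Ideal.comap φ P = p := by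
  obtain ⟨l, hl, hbot⟩ := exists_prime_prodList_bot (A := Q)
  have h1 : prodList (l.map (Ideal.comap φ)) ≤ p := by
    refine le_trans (prodList_comap_le φ l) ?_
    intro a ha
    have h2 : φ a ∈ (⊥ : Ideal Q) := hbot (Ideal.mem_comap.mp ha)
    have h3 : a = 0 := hinj (by simpa using h2)
    simp [h3]
  have hrc : ∀ A ∈ l.map (Ideal.comap φ), RightClosed A := by
    intro A hA
    rw [List.mem_map] at hA
    obtain ⟨P₀, hP₀, rfl⟩ := hA
    intro a ha r
    rw [Ideal.mem_comap, map_mul]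
    exact (hl P₀ hP₀).1 _ (Ideal.mem_comap.mp ha) (φ r)
  obtain ⟨Pc, hPcmem, hPcle⟩ := prodList_le_prime hp.1 _ hrc h1
  rw [List.mem_map] at hPcmem
  obtain ⟨P₀, hP₀l, rfl⟩ := hPcmem
  obtain ⟨P, hPmin, hPle⟩ := exists_minimal_prime_le (hl P₀ hP₀l)
  have hcle : Ideal.comap φ P ≤ p := le_trans (Ideal.comap_mono hPle) hPcle
  have hcpr : IsPrimeTwoSided (Ideal.comap φ P) :=
    comap_isPrime2 φ hOre hinj hunit hfrac hPmin.1
  exact ⟨P, hPmin, hp.2 _ hcpr hcle⟩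

end Loc2

/-- Let `R` be a ring whose regular elements `C` form a left Ore set
with `Q = C⁻¹R` left Noetherian. Then the map `p ↦ C⁻¹p` gives a bijection between the
set of minimal prime ideals of `R` and the set of minimal prime ideals of `Q`, with
inverse `q ↦ q ∩ R`. Here `C⁻¹p = {(φ c)⁻¹ (φ a) | c ∈ C, a ∈ p}` and `q ∩ R` is the
preimage `Ideal.comap φ q`. -/
theorem stmt19 {R Q : Type*} [Ring R] [Ring Q]
    (hOre : ∀ (r c : R), IsRegular c → ∃ c' r' : R, IsRegular c' ∧ c' * r = r' * c)
    (φ : R →+* Q) (hinj : Function.Injective φ)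
    (hunit : ∀ c : R, IsRegular c → IsUnit (φ c))
    (hfrac : ∀ q : Q, ∃ c r : R, IsRegular c ∧ φ c * q = φ r)
    [IsNoetherianRing Q] :
    (∀ p : Ideal R, IsMinimalPrimeTwoSided p →
      ∃ P : Ideal Q, IsMinimalPrimeTwoSided P ∧
        (∀ q : Q, q ∈ P ↔ ∃ c a : R, IsRegular c ∧ a ∈ p ∧ φ c * q = φ a) ∧
        Ideal.comap φ P = p) ∧
    (∀ P : Ideal Q, IsMinimalPrimeTwoSided P →
      IsMinimalPrimeTwoSided (Ideal.comap φ P) ∧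
        ∀ q : Q, q ∈ P ↔
          ∃ c a : R, IsRegular c ∧ a ∈ Ideal.comap φ P ∧ φ c * q = φ a) := by
  constructor
  · intro p hp
    obtain ⟨P, hPmin, hPc⟩ := exists_min_prime_comap_eq φ hOre hinj hunit hfrac hp
    refine ⟨P, hPmin, ?_, hPc⟩
    intro q
    rw [← hPc]
    exact mem_iff_frac φ hunit hfrac P q
  · intro P hP
    refine ⟨⟨comap_isPrime2 φ hOre hinj hunit hfrac hP.1, ?_⟩,
      fun q => mem_iff_frac φ hunit hfrac P q⟩
    intro p' hp' hle
    obtain ⟨p'', hp''min, hp''le⟩ := exists_minimal_prime_le hp'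
    obtain ⟨Pm, hPmmin, hPmc⟩ := exists_min_prime_comap_eq φ hOre hinj hunit hfrac hp''min
    have hPmle : Pm ≤ P :=
      le_of_comap_le φ hunit hfrac (by rw [hPmc]; exact le_trans hp''le hle)
    have hPP : Pm = P := hP.2 _ hPmmin.1 hPmle
    have hc'' : Ideal.comap φ P = p'' := by rw [← hPP]; exact hPmc
    exact le_antisymm hle (by rw [hc'']; exact hp''le)
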